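/- The infinite product g(k) := ∏_{m≥1} (1/3)(1 + 2 cos(2πk / 2^m)) converges for every real k, and the convergence of the partial products to g is uniform on every compact subset of ℝ; in particular, g : ℝ → ℝ is continuous. -/

import Mathlib

open Filter Topology Real

noncomputable section

/-- The partial product ∏_{m=1}^{n} (1/3)(1 + 2 cos(2πk/2^m)). -/
noncomputable def sternProdPartial (n : ℕ) (k : ℝ) : ℝ :=
  ∏ m ∈ Finset.Icc 1 n, (1 / 3) * (1 + 2 * Real.cos (2 * π * k / 2 ^ m))

namespace SternAux

/-- The m-th factor of the product. -/
noncomputable def factor (m : ℕ) (k : ℝ) : ℝ :=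
  (1 / 3) * (1 + 2 * Real.cos (2 * π * k / 2 ^ m))

lemma sternProdPartial_eq (n : ℕ) (k : ℝ) :
    sternProdPartial n k = ∏ m ∈ Finset.Ioc 0 n, factor m k := by
  rw [sternProdPartial, ← Finset.Icc_add_one_left_eq_Ioc]
  rfl

lemma one_sub_cos_le (x : ℝ) : 1 - Real.cos x ≤ x ^ 2 / 2 := by
  have h1 : Real.cos x = 1 - 2 * Real.sin (x / 2) ^ 2 := by
    have := Real.cos_two_mul (x / 2)
    have h2 := Real.cos_sq' (x / 2)
    rw [h2] at this
    have hx : 2 * (x / 2) = x := by ring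
    rw [hx] at this
    linarith
  have h3 : Real.sin (x / 2) ^ 2 ≤ (x / 2) ^ 2 := Real.sin_sq_le_sq
  have h4 : (x / 2) ^ 2 = x ^ 2 / 4 := by ring
  linarith

lemma factor_sub_one_abs (m : ℕ) (k : ℝ) :
    |factor m k - 1| ≤ (2 * π * k) ^ 2 / 3 * (1 / 4) ^ m := by
  set θ := 2 * π * k / 2 ^ m with hθ
  have h1 : factor m k - 1 = -(2 / 3 * (1 - Real.cos θ)) := by
    rw [factor]; ring
  have hcos : Real.cos θ ≤ 1 := Real.cos_le_one θ
  have h2 : |factor m k - 1| = 2 / 3 * (1 - Real.cos θ) := by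
    rw [h1, abs_neg, abs_of_nonneg (by linarith)]
  have h3 : 1 - Real.cos θ ≤ θ ^ 2 / 2 := one_sub_cos_le θ
  have hpow : ((2 : ℝ) ^ m) ^ 2 = 4 ^ m := by
    rw [← pow_mul, mul_comm, pow_mul]; norm_num
  have h4 : θ ^ 2 = (2 * π * k) ^ 2 * (1 / 4) ^ m := by
    rw [hθ, div_pow, hpow, div_eq_mul_inv, one_div, inv_pow]
  have h5 : 2 / 3 * (θ ^ 2 / 2) = (2 * π * k) ^ 2 / 3 * (1 / 4) ^ m := by
    rw [h4]; ring
  rw [h2]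
  linarith [h3, h5, mul_le_mul_of_nonneg_left h3 (by norm_num : (0:ℝ) ≤ 2/3)]

lemma abs_prod_sub_one_le (s : Finset ℕ) (a u : ℕ → ℝ)
    (h : ∀ i ∈ s, |a i - 1| ≤ u i) (hu : ∀ i ∈ s, 0 ≤ u i) :
    |∏ i ∈ s, a i - 1| ≤ ∏ i ∈ s, (1 + u i) - 1 := by
  classical
  induction s using Finset.induction_on with
  | empty => simp
  | @insert j t hj ih =>
    have hmem : ∀ i ∈ t, i ∈ insert j t := fun i hi => Finset.mem_insert_of_mem hi
    have ihP : |∏ i ∈ t, a i - 1| ≤ ∏ i ∈ t, (1 + u i) - 1 :=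
      ih (fun i hi => h i (hmem i hi)) (fun i hi => hu i (hmem i hi))
    have hQ1 : (1 : ℝ) ≤ ∏ i ∈ t, (1 + u i) := by
      calc (1:ℝ) = ∏ _i ∈ t, (1:ℝ) := by simp
        _ ≤ ∏ i ∈ t, (1 + u i) :=
            Finset.prod_le_prod (by simp) (fun i hi => by linarith [hu i (hmem i hi)])
    have hja := h j (Finset.mem_insert_self j t)
    have hju := hu j (Finset.mem_insert_self j t)
    have haj : |a j| ≤ 1 + u j := by
      calc |a j| = |(a j - 1) + 1| := by ring_nf
        _ ≤ |a j - 1| + 1 := by simpa using abs_add_le (a j - 1) 1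
        _ ≤ 1 + u j := by linarith
    rw [Finset.prod_insert hj, Finset.prod_insert hj]
    set P := ∏ i ∈ t, a i
    set Q := ∏ i ∈ t, (1 + u i)
    have key : a j * P - 1 = a j * (P - 1) + (a j - 1) := by ring
    calc |a j * P - 1| ≤ |a j * (P - 1)| + |a j - 1| := by
          rw [key]; exact abs_add_le _ _
      _ = |a j| * |P - 1| + |a j - 1| := by rw [abs_mul]
      _ ≤ (1 + u j) * (Q - 1) + u j := by
          have := mul_le_mul haj ihP (abs_nonneg _) (by linarith)
          linarith
      _ = (1 + u j) * Q - 1 := by ring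

lemma abs_prod_le (s : Finset ℕ) (a u : ℕ → ℝ)
    (h : ∀ i ∈ s, |a i - 1| ≤ u i) (hu : ∀ i ∈ s, 0 ≤ u i) :
    |∏ i ∈ s, a i| ≤ ∏ i ∈ s, (1 + u i) := by
  have h1 := abs_prod_sub_one_le s a u h hu
  calc |∏ i ∈ s, a i| = |(∏ i ∈ s, a i - 1) + 1| := by ring_nf
    _ ≤ |∏ i ∈ s, a i - 1| + 1 := by
        have := abs_add_le (∏ i ∈ s, a i - 1) 1
        simpa using this
    _ ≤ ∏ i ∈ s, (1 + u i) := by linarith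

lemma prod_one_add_le_exp (s : Finset ℕ) (u : ℕ → ℝ) (hu : ∀ i ∈ s, 0 ≤ u i) :
    ∏ i ∈ s, (1 + u i) ≤ Real.exp (∑ i ∈ s, u i) := by
  rw [Real.exp_sum]
  exact Finset.prod_le_prod (fun i hi => by linarith [hu i hi])
    (fun i hi => by linarith [Real.add_one_le_exp (u i)])

lemma geom_Ioc_eq (n M : ℕ) (hM : n ≤ M) :
    ∑ m ∈ Finset.Ioc n M, ((1 : ℝ) / 4) ^ m = (((1:ℝ)/4) ^ n - ((1:ℝ)/4) ^ M) / 3 := by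
  induction M, hM using Nat.le_induction with
  | base => simp
  | succ M hM ih =>
    rw [Finset.sum_Ioc_succ_top hM, ih, pow_succ]
    ring

lemma geom_Ioc_le (n M : ℕ) :
    ∑ m ∈ Finset.Ioc n M, ((1 : ℝ) / 4) ^ m ≤ ((1:ℝ)/4) ^ n := by
  rcases le_or_gt n M with h | h
  · rw [geom_Ioc_eq n M h]
    have h1 : (0:ℝ) ≤ (1/4 : ℝ) ^ M := by positivity
    have h2 : (0:ℝ) ≤ (1/4 : ℝ) ^ n := by positivity
    linarith
  · rw [Finset.Ioc_eq_empty (by omega)]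
    simp

lemma key (R : ℝ) : UniformCauchySeqOn sternProdPartial atTop {k : ℝ | |k| ≤ R} := by
  rw [Metric.uniformCauchySeqOn_iff]
  intro ε hε
  set C := (2 * π * R) ^ 2 / 3 with hC
  have hC0 : (0:ℝ) ≤ C := by positivity
  have htend : Tendsto (fun n : ℕ => Real.exp C * (Real.exp (C * (1/4) ^ n) - 1))
      atTop (𝓝 0) := by
    have h4 : Tendsto (fun n : ℕ => ((1:ℝ)/4) ^ n) atTop (𝓝 0) :=
      tendsto_pow_atTop_nhds_zero_of_lt_one (by norm_num) (by norm_num)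
    have h1 : Tendsto (fun n : ℕ => C * ((1:ℝ)/4) ^ n) atTop (𝓝 0) := by
      simpa using h4.const_mul C
    have h2 : Tendsto (fun n : ℕ => Real.exp (C * (1/4) ^ n) - 1) atTop (𝓝 0) := by
      have h3 := (Real.continuous_exp.tendsto 0).comp h1
      simpa using h3.sub_const 1
    simpa using h2.const_mul (Real.exp C)
  obtain ⟨N, hN⟩ := eventually_atTop.mp (htend.eventually (gt_mem_nhds hε))
  refine ⟨N, fun m hm n hn k hk => ?_⟩
  have hk2 : k ^ 2 ≤ R ^ 2 := by
    have : |k| ≤ R := hk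
    nlinarith [abs_nonneg k, sq_abs k]
  have hfac : ∀ i : ℕ, |factor i k - 1| ≤ C * (1/4) ^ i := by
    intro i
    refine (factor_sub_one_abs i k).trans ?_
    have hpos : (0:ℝ) ≤ ((1:ℝ)/4) ^ i := by positivity
    have : (2 * π * k) ^ 2 / 3 ≤ C := by
      rw [hC]
      have hpp : π ^ 2 * k ^ 2 ≤ π ^ 2 * R ^ 2 :=
        mul_le_mul_of_nonneg_left hk2 (sq_nonneg π)
      nlinarith [hpp]
    exact mul_le_mul_of_nonneg_right this hpos
  have hu : ∀ i : ℕ, (0:ℝ) ≤ C * (1/4) ^ i := fun i => by positivity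
  have claim : ∀ n' m' : ℕ, N ≤ n' → n' ≤ m' →
      dist (sternProdPartial m' k) (sternProdPartial n' k) < ε := by
    intro n' m' hn' hnm
    rw [Real.dist_eq, sternProdPartial_eq, sternProdPartial_eq,
      ← Finset.prod_Ioc_consecutive _ (Nat.zero_le n') hnm]
    set P := ∏ i ∈ Finset.Ioc 0 n', factor i k with hP
    set Q := ∏ i ∈ Finset.Ioc n' m', factor i k with hQ
    have hPbound : |P| ≤ Real.exp C := by
      have h1 : |P| ≤ ∏ i ∈ Finset.Ioc 0 n', (1 + C * (1/4) ^ i) :=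
        abs_prod_le _ _ _ (fun i _ => hfac i) (fun i _ => hu i)
      have h2 := prod_one_add_le_exp (Finset.Ioc 0 n') _ (fun i _ => hu i)
      have h3 : ∑ i ∈ Finset.Ioc 0 n', C * (1/4) ^ i ≤ C := by
        rw [← Finset.mul_sum]
        calc C * ∑ i ∈ Finset.Ioc 0 n', ((1:ℝ)/4) ^ i
            ≤ C * ((1:ℝ)/4) ^ 0 := mul_le_mul_of_nonneg_left (geom_Ioc_le 0 n') hC0
          _ = C := by norm_num
      exact h1.trans (h2.trans (Real.exp_le_exp.mpr h3))
    have hQbound : |Q - 1| ≤ Real.exp (C * (1/4) ^ n') - 1 := by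
      have h1 : |Q - 1| ≤ ∏ i ∈ Finset.Ioc n' m', (1 + C * (1/4) ^ i) - 1 :=
        abs_prod_sub_one_le _ _ _ (fun i _ => hfac i) (fun i _ => hu i)
      have h2 := prod_one_add_le_exp (Finset.Ioc n' m') _ (fun i _ => hu i)
      have h3 : ∑ i ∈ Finset.Ioc n' m', C * (1/4) ^ i ≤ C * (1/4) ^ n' := by
        rw [← Finset.mul_sum]
        exact mul_le_mul_of_nonneg_left (geom_Ioc_le n' m') hC0
      have h4 := Real.exp_le_exp.mpr h3
      linarith
    have hfinal : |P * Q - P| ≤ Real.exp C * (Real.exp (C * (1/4) ^ n') - 1) := by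
      have heq : P * Q - P = P * (Q - 1) := by ring
      rw [heq, abs_mul]
      exact mul_le_mul hPbound hQbound (abs_nonneg _) (Real.exp_pos C).le
    calc |P * Q - P| ≤ Real.exp C * (Real.exp (C * (1/4) ^ n') - 1) := hfinal
      _ < ε := hN n' hn'
  rcases le_total n m with h | h
  · exact claim n m hn h
  · rw [dist_comm]; exact claim m n hm h

end SternAux

/-- The infinite product g(k) = ∏_{m≥1} (1/3)(1 + 2 cos(2πk/2^m)) converges for every real k,
uniformly on every compact subset of ℝ; in particular the limit g is continuous. -/
theorem sternProd_converges :
    ∃ g : ℝ → ℝ,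
      (∀ k : ℝ, Tendsto (fun n => sternProdPartial n k) atTop (𝓝 (g k))) ∧
      (∀ K : Set ℝ, IsCompact K →
        TendstoUniformlyOn sternProdPartial g atTop K) ∧
      Continuous g := by
  have hpt : ∀ k : ℝ, ∃ l : ℝ, Tendsto (fun n => sternProdPartial n k) atTop (𝓝 l) := by
    intro k
    have hc : CauchySeq (fun n => sternProdPartial n k) :=
      (SternAux.key |k|).cauchySeq (by simp)
    exact cauchySeq_tendsto_of_complete hc
  choose g hg using hpt
  have huK : ∀ K : Set ℝ, IsCompact K → TendstoUniformlyOn sternProdPartial g atTop K := by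
    intro K hK
    obtain ⟨R, hR⟩ := hK.isBounded.subset_closedBall 0
    have hsub : K ⊆ {k : ℝ | |k| ≤ R} := fun x hx => by
      have := hR hx
      simpa [Real.dist_eq] using this
    exact ((SternAux.key R).mono hsub).tendstoUniformlyOn_of_tendsto (fun x _ => hg x)
  have hcontPartial : ∀ n : ℕ, Continuous (sternProdPartial n) := by
    intro n
    unfold sternProdPartial
    exact continuous_finset_prod _ (fun m _ => by fun_prop)
  refine ⟨g, hg, huK, ?_⟩
  rw [continuous_iff_continuousAt]
  intro k
  have hcomp : IsCompact (Metric.closedBall k 1) := isCompact_closedBall k 1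
  have h := huK _ hcomp
  have hcont : ContinuousOn g (Metric.closedBall k 1) :=
    h.continuousOn (Eventually.of_forall fun n => (hcontPartial n).continuousOn).frequently
  exact hcont.continuousAt (Metric.closedBall_mem_nhds k one_pos)

end
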